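/- Let F be a linearly ordered field, let A and B be magnitudes of F, and let α = a + A and β = b + B be cosets (a, b ∈ F). Then exactly one of the following holds up to overlap: α ∩ β = ∅, or α ⊆ β, or β ⊆ α; that is, α ∩ β = ∅ ∨ α ⊆ β ∨ β ⊆ α. -/

import Mathlib

open Pointwise

/-- A *magnitude* of a linearly ordered field `F` is an order-convex additive subgroup of `F`,
given as a set: it contains `0`, is closed under addition and negation, and is order-convex. -/
def IsMagnitude {F : Type*} [Field F] [LinearOrder F] [IsStrictOrderedRing F] (A : Set F) : Prop :=
  (0 : F) ∈ A ∧ (∀ x ∈ A, ∀ y ∈ A, x + y ∈ A) ∧ (∀ x ∈ A, -x ∈ A) ∧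
    (∀ x ∈ A, ∀ y ∈ A, ∀ z : F, x ≤ z → z ≤ y → z ∈ A)

/-- Order relation on subsets of `F`: `S ≤ T` iff every element of `S` is below some element of `T`. -/
def SetLE {F : Type*} [Field F] [LinearOrder F] [IsStrictOrderedRing F] (S T : Set F) : Prop :=
  ∀ x ∈ S, ∃ y ∈ T, x ≤ y

/-- Two magnitudes are comparable. -/
lemma magnitude_comparable {F : Type*} [Field F] [LinearOrder F] [IsStrictOrderedRing F]
    {A B : Set F} (hA : IsMagnitude A) (hB : IsMagnitude B) : A ⊆ B ∨ B ⊆ A := by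
  by_cases h : A ⊆ B
  · exact Or.inl h
  · right
    obtain ⟨x, hxA, hxB⟩ := Set.not_subset.mp h
    obtain ⟨hA0, hAadd, hAneg, hAconv⟩ := hA
    obtain ⟨hB0, hBadd, hBneg, hBconv⟩ := hB
    have htA : |x| ∈ A := by
      rcases abs_cases x with ⟨h1, _⟩ | ⟨h1, _⟩
      · rw [h1]; exact hxA
      · rw [h1]; exact hAneg x hxA
    have htB : |x| ∉ B := by
      intro hm
      exact hxB (hBconv _ (hBneg _ hm) _ hm x (neg_abs_le x) (le_abs_self x))
    intro y hy
    rcases le_or_gt y |x| with h1 | h1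
    · rcases le_or_gt (-|x|) y with h2 | h2
      · exact hAconv _ (hAneg _ htA) _ htA y h2 h1
      · exact absurd (hBconv _ hB0 _ (hBneg _ hy) |x| (abs_nonneg x)
          (by linarith)) htB
    · exact absurd (hBconv _ hB0 _ hy |x| (abs_nonneg x) h1.le) htB

theorem coset_trichotomy {F : Type*} [Field F] [LinearOrder F] [IsStrictOrderedRing F]
    (A B : Set F) (hA : IsMagnitude A) (hB : IsMagnitude B) (a b : F) :
    ({a} + A) ∩ ({b} + B) = ∅ ∨ ({a} + A) ⊆ ({b} + B) ∨ ({b} + B) ⊆ ({a} + A) := by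
  by_cases h : ({a} + A) ∩ ({b} + B) = ∅
  · exact Or.inl h
  · right
    obtain ⟨c, hc1, hc2⟩ := Set.nonempty_iff_ne_empty.mpr h
    rw [Set.singleton_add] at hc1 hc2
    obtain ⟨x₀, hx₀, hcx⟩ := hc1
    obtain ⟨y₀, hy₀, hcy⟩ := hc2
    have hab : a - b = y₀ - x₀ := by
      have : a + x₀ = b + y₀ := by
        have h1 : a + x₀ = c := hcx
        have h2 : b + y₀ = c := hcy
        rw [h1, h2]
      linarith
    rcases magnitude_comparable hA hB with hAB | hBA
    · left
      intro z hz
      rw [Set.singleton_add] at hz ⊢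
      obtain ⟨u, hu, hzu⟩ := hz
      refine ⟨y₀ + (-x₀ + u), hB.2.1 _ hy₀ _ (hB.2.1 _ (hAB (hA.2.2.1 _ hx₀)) _ (hAB hu)), ?_⟩
      simp only at hzu ⊢
      rw [← hzu]; linarith
    · right
      intro z hz
      rw [Set.singleton_add] at hz ⊢
      obtain ⟨u, hu, hzu⟩ := hz
      refine ⟨x₀ + (-y₀ + u), hA.2.1 _ hx₀ _ (hA.2.1 _ (hBA (hB.2.2.1 _ hy₀)) _ (hBA hu)), ?_⟩
      simp only at hzu ⊢
      rw [← hzu]; linarith
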